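/- Let n ≥ 1, p_i ≥ 1 and c_i > 0 for i = 1,…,n, b ∈ ℝ, and M(x) = x² - 2bx + Σ_{i=1}^n c_i|x|^{p_i}. Let B = {i : p_i = 1}. If B ≠ ∅ and |b| ≤ (Σ_{i∈B} c_i)/2, then x = 0 is a global minimizer of M on ℝ. -/

import Mathlib

open scoped Classical

/-- For `M(x) = x² - 2bx + Σ c_i |x|^{p_i}` with `B = {i : p_i = 1}` nonempty and
`|b| ≤ (Σ_{i∈B} c_i)/2`, the point `x = 0` is a global minimizer of `M`. -/
theorem stmt_17 {n : ℕ} (hn : 1 ≤ n) (c p : Fin n → ℝ)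
    (hc : ∀ i, 0 < c i) (hp : ∀ i, 1 ≤ p i) (b : ℝ)
    (hBne : (Finset.univ.filter (fun i => p i = 1)).Nonempty)
    (hb : |b| ≤ (∑ i ∈ Finset.univ.filter (fun i => p i = 1), c i) / 2) :
    ∀ x : ℝ,
      (0 : ℝ) ^ 2 - 2 * b * 0 + ∑ i, c i * |(0 : ℝ)| ^ p i
        ≤ x ^ 2 - 2 * b * x + ∑ i, c i * |x| ^ p i := by
  intro x
  set B := Finset.univ.filter (fun i => p i = 1) with hB
  have hL : (0 : ℝ) ^ 2 - 2 * b * 0 + ∑ i, c i * |(0 : ℝ)| ^ p i = 0 := by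
    have : ∀ i : Fin n, c i * |(0 : ℝ)| ^ p i = 0 := by
      intro i
      have hpne : p i ≠ 0 := by linarith [hp i]
      simp [Real.zero_rpow hpne]
    rw [Finset.sum_congr rfl (fun i _ => this i)]
    simp
  rw [hL]
  have hterm : ∀ i : Fin n, 0 ≤ c i * |x| ^ p i := fun i =>
    mul_nonneg (hc i).le (Real.rpow_nonneg (abs_nonneg x) _)
  have hsub : ∑ i ∈ B, c i * |x| ^ p i ≤ ∑ i, c i * |x| ^ p i :=
    Finset.sum_le_sum_of_subset_of_nonneg (Finset.filter_subset _ _)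
      (fun i _ _ => hterm i)
  have hBsum : ∑ i ∈ B, c i * |x| ^ p i = (∑ i ∈ B, c i) * |x| := by
    rw [Finset.sum_mul]
    refine Finset.sum_congr rfl fun i hi => ?_
    have : p i = 1 := (Finset.mem_filter.mp hi).2
    rw [this, Real.rpow_one]
  have h2 : 2 * b * x ≤ (∑ i ∈ B, c i) * |x| := by
    calc 2 * b * x ≤ |2 * b * x| := le_abs_self _
      _ = 2 * |b| * |x| := by rw [abs_mul, abs_mul]; simp [abs_of_nonneg]
      _ ≤ 2 * ((∑ i ∈ B, c i) / 2) * |x| := by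
          apply mul_le_mul_of_nonneg_right _ (abs_nonneg x)
          linarith
      _ = (∑ i ∈ B, c i) * |x| := by ring
  nlinarith [sq_nonneg x, hsub, hBsum, h2]
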